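/- Let N = 2^b + k - 1 with positive integers b and k ≥ 2, and let S = {[i, i+k-1] : 1 ≤ i ≤ 2^b}. For each i in {0,...,b-1} and j in {0,...,2^i - 1} define A^{i,j} = [1 + j·2^{b-i}, (2j+1)·2^{b-i-1}] and B^{i,j} = [(2j+1)·2^{b-i-1} + k, (j+1)·2^{b-i} + k - 1]. Then the collection {{A^{i,j}, B^{i,j}}} is a biclique cover of the conflict graph of SOS k(N): each pair {A^{i,j}, B^{i,j}} is a biclique of the conflict graph (every element of A^{i,j} differs from every element of B^{i,j} by at least k), and every edge uv of the conflict graph (i.e., every pair with |u - v| ≥ k, u, v ∈ [1,N]) is covered by some biclique. -/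

import Mathlib

/-- The set `A^{i,j} = [1 + j·2^{b-i}, (2j+1)·2^{b-i-1}]`. -/
def sosA (b i j : ℕ) : Finset ℕ :=
  Finset.Icc (1 + j * 2 ^ (b - i)) ((2 * j + 1) * 2 ^ (b - i - 1))

/-- The set `B^{i,j} = [(2j+1)·2^{b-i-1} + k, (j+1)·2^{b-i} + k - 1]`. -/
def sosB (b k i j : ℕ) : Finset ℕ :=
  Finset.Icc ((2 * j + 1) * 2 ^ (b - i - 1) + k) ((j + 1) * 2 ^ (b - i) + k - 1)

lemma sos_dyadic (b x y : ℕ) (hxy : x < y) (hy : y < 2 ^ b) :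
    ∃ i < b, ∃ j < 2 ^ i, j * 2 ^ (b - i) ≤ x ∧ x < (2 * j + 1) * 2 ^ (b - i - 1) ∧
      (2 * j + 1) * 2 ^ (b - i - 1) ≤ y ∧ y < (j + 1) * 2 ^ (b - i) := by
  have hb : 1 ≤ b := by
    by_contra h
    have : b = 0 := by omega
    subst this; simp at hy; omega
  have hP : ∃ m, x / 2 ^ (b - m - 1) ≠ y / 2 ^ (b - m - 1) := by
    refine ⟨b - 1, ?_⟩
    have : b - (b - 1) - 1 = 0 := by omega
    simp [this]; omega
  set i := Nat.find hP with hi_def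
  have hspec : x / 2 ^ (b - i - 1) ≠ y / 2 ^ (b - i - 1) := Nat.find_spec hP
  have hib : i < b := by
    have : i ≤ b - 1 := Nat.find_min' hP (by
      have : b - (b - 1) - 1 = 0 := by omega
      simp [this]; omega)
    omega
  have heq : x / 2 ^ (b - i) = y / 2 ^ (b - i) := by
    rcases Nat.eq_zero_or_pos i with h0 | h0
    · rw [h0]
      simp only [Nat.sub_zero]
      rw [Nat.div_eq_of_lt (lt_trans hxy hy), Nat.div_eq_of_lt hy]
    · have hmin := Nat.find_min hP (show i - 1 < i by omega)
      have he : b - (i - 1) - 1 = b - i := by omega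
      rw [he] at hmin
      omega
  set j := x / 2 ^ (b - i) with hj_def
  have hd : 0 < 2 ^ (b - i - 1) := Nat.pow_pos (by norm_num)
  have hexp : 2 ^ (b - i) = 2 ^ (b - i - 1) * 2 := by
    rw [← pow_succ]
    congr 1; omega
  have hjlt : j < 2 ^ i := by
    rw [hj_def, Nat.div_lt_iff_lt_mul (Nat.pow_pos (by norm_num))]
    calc x < 2 ^ b := lt_trans hxy hy
    _ = 2 ^ i * 2 ^ (b - i) := by rw [← pow_add]; congr 1; omega
  have ha2 : x / 2 ^ (b - i - 1) / 2 = j := by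
    rw [Nat.div_div_eq_div_mul, ← hexp]
  have hc2 : y / 2 ^ (b - i - 1) / 2 = j := by
    rw [Nat.div_div_eq_div_mul, ← hexp, ← heq]
  have hle : x / 2 ^ (b - i - 1) ≤ y / 2 ^ (b - i - 1) :=
    Nat.div_le_div_right hxy.le
  have ha : x / 2 ^ (b - i - 1) = 2 * j := by omega
  have hc : y / 2 ^ (b - i - 1) = 2 * j + 1 := by omega
  refine ⟨i, hib, j, hjlt, ?_, ?_, ?_, ?_⟩
  · calc j * 2 ^ (b - i) = 2 * j * 2 ^ (b - i - 1) := by rw [hexp]; ring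
    _ ≤ x := by rw [← ha]; exact Nat.div_mul_le_self _ _
  · have : x / 2 ^ (b - i - 1) < 2 * j + 1 := by omega
    exact (Nat.div_lt_iff_lt_mul hd).mp this
  · calc (2 * j + 1) * 2 ^ (b - i - 1) = y / 2 ^ (b - i - 1) * 2 ^ (b - i - 1) := by rw [hc]
    _ ≤ y := Nat.div_mul_le_self _ _
  · have : y / 2 ^ (b - i - 1) < 2 * j + 2 := by omega
    have := (Nat.div_lt_iff_lt_mul hd).mp this
    calc y < (2 * j + 2) * 2 ^ (b - i - 1) := this
    _ = (j + 1) * 2 ^ (b - i) := by rw [hexp]; ring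

/-- For `N = 2^b + k - 1` (`b ≥ 1`, `k ≥ 2`), the pairs
`{A^{i,j}, B^{i,j}}` for `0 ≤ i < b`, `0 ≤ j < 2^i` form a biclique cover of the
conflict graph of `SOS k(N)`: each pair is a biclique (all elements of `A^{i,j}`
and `B^{i,j}` differ by at least `k`), and every edge of the conflict graph
(every pair `u, v ∈ [1, N]` with `|u - v| ≥ k`) is covered by some pair. -/
theorem sos_biclique_cover (b k : ℕ) (hb : 1 ≤ b) (hk : 2 ≤ k) :
    (∀ i < b, ∀ j < 2 ^ i, ∀ u ∈ sosA b i j, ∀ v ∈ sosB b k i j,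
      k ≤ ((u : ℤ) - (v : ℤ)).natAbs) ∧
    (∀ u ∈ Finset.Icc 1 (2 ^ b + k - 1), ∀ v ∈ Finset.Icc 1 (2 ^ b + k - 1),
      k ≤ ((u : ℤ) - (v : ℤ)).natAbs →
      ∃ i < b, ∃ j < 2 ^ i,
        (u ∈ sosA b i j ∧ v ∈ sosB b k i j) ∨ (v ∈ sosA b i j ∧ u ∈ sosB b k i j)) := by
  constructor
  · intro i hi j hj u hu v hv
    rw [sosA, Finset.mem_Icc] at hu
    rw [sosB, Finset.mem_Icc] at hv
    set Q := (2 * j + 1) * 2 ^ (b - i - 1) with hQ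
    omega
  · intro u hu v hv huv
    rw [Finset.mem_Icc] at hu hv
    have h2b : 1 ≤ 2 ^ b := Nat.one_le_two_pow
    -- main construction for the ordered case
    have key : ∀ u v : ℕ, 1 ≤ u → v ≤ 2 ^ b + k - 1 → u + k ≤ v →
        ∃ i < b, ∃ j < 2 ^ i, u ∈ sosA b i j ∧ v ∈ sosB b k i j := by
      intro u v hu1 hv2 hd
      obtain ⟨i, hi, j, hj, h1, h2, h3, h4⟩ :=
        sos_dyadic b (u - 1) (v - k) (by omega) (by omega)
      refine ⟨i, hi, j, hj, ?_, ?_⟩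
      · rw [sosA, Finset.mem_Icc]
        set P := j * 2 ^ (b - i) with hP
        set Q := (2 * j + 1) * 2 ^ (b - i - 1) with hQ
        omega
      · rw [sosB, Finset.mem_Icc]
        set Q := (2 * j + 1) * 2 ^ (b - i - 1) with hQ
        set R := (j + 1) * 2 ^ (b - i) with hR
        omega
    rcases le_or_gt (u + k) v with h | h
    · obtain ⟨i, hi, j, hj, hA, hB⟩ := key u v (by omega) (by omega) h
      exact ⟨i, hi, j, hj, Or.inl ⟨hA, hB⟩⟩
    · have h' : v + k ≤ u := by omega
      obtain ⟨i, hi, j, hj, hA, hB⟩ := key v u (by omega) (by omega) h'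
      exact ⟨i, hi, j, hj, Or.inr ⟨hA, hB⟩⟩
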